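/- Chained non-expansiveness: with G_s(z) = F(z) + μ∑_{i=1}^s 2^i (z - z_i) where F is μ-strongly monotone (hence each G_s has a unique zero z_s*), for every s ≥ 1 it holds that ‖z_s* - z_{s-1}*‖ ≤ ‖z_{s-1}* - z_s‖. -/

import Mathlib

open RealInnerProductSpace

theorem chained_nonexpansiveness {d : ℕ} (μ : ℝ) (hμ : 0 < μ)
    (F : EuclideanSpace ℝ (Fin d) → EuclideanSpace ℝ (Fin d))
    (hmono : ∀ z z', μ * ‖z - z'‖ ^ 2 ≤ ⟪F z - F z', z - z'⟫)
    (z : ℕ → EuclideanSpace ℝ (Fin d))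
    (w : ℕ → EuclideanSpace ℝ (Fin d))
    (hw : ∀ s, F (w s) + μ • ∑ i ∈ Finset.Icc 1 s, (2 : ℝ) ^ i • (w s - z i) = 0) :
    ∀ s : ℕ, 1 ≤ s → ‖w s - w (s - 1)‖ ≤ ‖w (s - 1) - z s‖ := by
  intro s hs
  obtain ⟨t, rfl⟩ := Nat.exists_eq_add_of_le' hs
  simp only [Nat.add_sub_cancel]
  set a := w (t + 1) with ha_def
  set b := w t with hb_def
  have ha := hw (t + 1)
  have hb := hw t
  rw [Finset.sum_Icc_succ_top (Nat.le_add_left 1 t)] at ha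
  set Sa := ∑ i ∈ Finset.Icc 1 t, (2 : ℝ) ^ i • (a - z i) with hSa
  set Sb := ∑ i ∈ Finset.Icc 1 t, (2 : ℝ) ^ i • (b - z i) with hSb
  have hdiff : F a - F b + μ • (Sa - Sb) =
      -(μ • ((2 : ℝ) ^ (t + 1) • (a - z (t + 1)))) := by
    have := congrArg₂ (· - ·) ha hb
    simp only [smul_add] at this ⊢
    rw [smul_sub]
    linear_combination (norm := module) this
  have hSdiff : Sa - Sb = (∑ i ∈ Finset.Icc 1 t, (2 : ℝ) ^ i) • (a - b) := by
    rw [hSa, hSb, ← Finset.sum_sub_distrib, Finset.sum_smul]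
    congr 1
    ext i
    rw [← smul_sub, sub_sub_sub_cancel_right]
  have hsum_nonneg : (0 : ℝ) ≤ ∑ i ∈ Finset.Icc 1 t, (2 : ℝ) ^ i :=
    Finset.sum_nonneg fun i _ => by positivity
  have hinner := congrArg (fun v => ⟪v, a - b⟫) hdiff
  simp only [inner_add_left, inner_neg_left, real_inner_smul_left, hSdiff,
    real_inner_self_eq_norm_sq] at hinner
  have hkey : ⟪a - z (t + 1), a - b⟫ ≤ 0 := by
    have h1 := hmono a b
    nlinarith [mul_pos hμ (pow_pos (show (0:ℝ) < 2 by norm_num) (t + 1)),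
      mul_nonneg hμ.le (sq_nonneg ‖a - b‖),
      mul_nonneg hμ.le (mul_nonneg hsum_nonneg (sq_nonneg ‖a - b‖))]
  have hsplit : (‖a - b‖ : ℝ) ^ 2 = ⟪a - z (t + 1), a - b⟫ + ⟪z (t + 1) - b, a - b⟫ := by
    rw [← inner_add_left, ← real_inner_self_eq_norm_sq]
    congr 1
    abel
  have hcs : ⟪z (t + 1) - b, a - b⟫ ≤ ‖b - z (t + 1)‖ * ‖a - b‖ := by
    calc ⟪z (t + 1) - b, a - b⟫ ≤ ‖z (t + 1) - b‖ * ‖a - b‖ := real_inner_le_norm _ _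
    _ = ‖b - z (t + 1)‖ * ‖a - b‖ := by rw [norm_sub_rev]
  nlinarith [norm_nonneg (a - b), norm_nonneg (b - z (t + 1))]
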